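/- Let (P_n) and (Q_n) be sequences of monic polynomials related by P_n + Σ_{i=1}^N r_{i,n} P_{n-i} = Q_n + Σ_{i=1}^M s_{i,n} Q_{n-i} for all n ≥ 0, and suppose (Q_n) is orthogonal with respect to the linear functional v. For n ≥ N-1 let B_n be the N×N matrix with (j,k) entry ⟨Q̄_{N-k} v, P_{n-j+1}⟩ (rows indexed by P_n, …, P_{n-(N-1)}, columns by Q̄_{N-1}, …, Q̄_0, where Q̄_i = Q_i/⟨v, Q_i²⟩). Then det B_n = (-1)^N r_{N,n} · det B_{n-1} for all n ≥ M+N. -/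

import Mathlib

open Polynomial

/-- Lemma 2.1 (a): determinant recursion for the matrices `B_n` when `(Q n)` is
orthogonal with respect to `v`. -/
theorem det_Bn_recursion
    (N M : ℕ) (hN : 1 ≤ N)
    (v : Polynomial ℂ →ₗ[ℂ] ℂ)
    (P Q : ℕ → Polynomial ℂ) (r s : ℕ → ℕ → ℂ)
    (hPmonic : ∀ n, (P n).Monic) (hPdeg : ∀ n, (P n).degree = n)
    (hQmonic : ∀ n, (Q n).Monic) (hQdeg : ∀ n, (Q n).degree = n)
    (horth : ∀ m n, m ≠ n → v (Q m * Q n) = 0)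
    (hreg : ∀ n, v (Q n ^ 2) ≠ 0)
    (hrz : ∀ i n, n < i → r i n = 0) (hsz : ∀ i n, n < i → s i n = 0)
    (hrel : ∀ n, P n + ∑ i ∈ Finset.Icc 1 N, r i n • P (n - i)
        = Q n + ∑ i ∈ Finset.Icc 1 M, s i n • Q (n - i))
    (B : ℕ → Matrix (Fin N) (Fin N) ℂ)
    (hB : ∀ n, ∀ j k : Fin N, B n j k
        = v (Q (N - 1 - (k : ℕ)) * P (n - (j : ℕ))) / v (Q (N - 1 - (k : ℕ)) ^ 2)) :
    ∀ n, M + N ≤ n → (B n).det = (-1) ^ N * r N n * (B (n - 1)).det := by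
  obtain ⟨N', rfl⟩ : ∃ N', N = N' + 1 := ⟨N - 1, (Nat.succ_pred_eq_of_pos hN).symm⟩
  intro n hn
  -- key orthogonality computation
  have key : ∀ mk : ℕ, mk ≤ N' →
      v (Q mk * P n) = -∑ i ∈ Finset.Icc 1 (N' + 1), r i n * v (Q mk * P (n - i)) := by
    intro mk hmk
    have h1 := congrArg (fun p => v (Q mk * p)) (hrel n)
    simp only [mul_add, Finset.mul_sum, mul_smul_comm, map_add, map_sum, map_smul,
      smul_eq_mul] at h1
    have hz : ∑ x ∈ Finset.Icc 1 M, s x n * v (Q mk * Q (n - x)) = 0 :=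
      Finset.sum_eq_zero fun i hi => by
        simp only [Finset.mem_Icc] at hi
        rw [horth mk (n - i) (by omega), mul_zero]
    rw [horth mk n (by omega), hz, add_zero] at h1
    exact eq_neg_of_add_eq_zero_left h1
  set σ : Equiv.Perm (Fin (N' + 1)) := (finRotate (N' + 1)).symm with hσ
  have hσval : ∀ j : Fin (N' + 1),
      ((σ j : ℕ)) = if (j : ℕ) = 0 then N' else (j : ℕ) - 1 := by
    intro j
    have h1 : σ j + 1 = j := by
      have := (finRotate (N' + 1)).apply_symm_apply j
      rwa [finRotate_succ_apply] at this
    have h2 : ((σ j) + 1 : Fin (N' + 1)).val = (j : ℕ) := congrArg Fin.val h1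
    rw [Fin.val_add_one] at h2
    by_cases hc : σ j = Fin.last N'
    · rw [if_pos hc] at h2
      rw [hc, Fin.val_last, ← h2]
      simp
    · rw [if_neg hc] at h2
      have hne : (σ j : ℕ) ≠ N' := fun h => hc (Fin.ext (by simpa [Fin.val_last] using h))
      split <;> omega
  set C : Matrix (Fin (N' + 1)) (Fin (N' + 1)) ℂ := (B (n - 1)).submatrix σ id with hC
  have hCrow : ∀ j k : Fin (N' + 1),
      C j k = v (Q (N' + 1 - 1 - (k : ℕ)) * P (n - 1 - (σ j : ℕ)))
        / v (Q (N' + 1 - 1 - (k : ℕ)) ^ 2) := by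
    intro j k
    rw [hC, Matrix.submatrix_apply, id, hB]
  set c : Fin (N' + 1) → ℂ :=
    fun j => if (j : ℕ) = 0 then -(r (N' + 1) n) else -(r (j : ℕ) n) with hc
  have elt : ∀ i : ℕ, i % (N' + 1) < N' + 1 := fun i => Nat.mod_lt _ (Nat.succ_pos _)
  set e : ℕ → Fin (N' + 1) := fun i => ⟨i % (N' + 1), elt i⟩ with he
  have hev : ∀ i, ((e i : ℕ)) = i % (N' + 1) := fun i => rfl
  have hrow0 : ∀ k : Fin (N' + 1), B n 0 k = ∑ j : Fin (N' + 1), c j * C j k := by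
    intro k
    have hk : (N' + 1 - 1 - (k : ℕ)) ≤ N' := by omega
    rw [hB]
    simp only [Fin.val_zero, Nat.sub_zero]
    rw [key _ hk, neg_div, Finset.sum_div, ← Finset.sum_neg_distrib]
    refine Finset.sum_nbij' e (fun j => if (j : ℕ) = 0 then N' + 1 else (j : ℕ))
      (fun a _ => Finset.mem_univ _) ?_ ?_ ?_ ?_
    · intro j _
      simp only [Finset.mem_Icc]
      have := j.isLt
      split <;> omega
    · intro i hi
      simp only [Finset.mem_Icc] at hi
      beta_reduce
      rw [hev]
      rcases eq_or_lt_of_le hi.2 with h | h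
      · subst h
        rw [Nat.mod_self, if_pos rfl]
      · rw [Nat.mod_eq_of_lt h, if_neg (by omega)]
    · intro j _
      apply Fin.ext
      rw [hev]
      beta_reduce
      by_cases h0 : (j : ℕ) = 0
      · rw [if_pos h0, Nat.mod_self, h0]
      · rw [if_neg h0, Nat.mod_eq_of_lt j.isLt]
    · intro i hi
      simp only [Finset.mem_Icc] at hi
      rw [hCrow, hσval]
      simp only [hc, hev]
      rcases eq_or_lt_of_le hi.2 with h | h
      · subst h
        simp only [Nat.mod_self, eq_self_iff_true, if_true]
        rw [show n - 1 - N' = n - (N' + 1) from by omega]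
        ring
      · rw [Nat.mod_eq_of_lt h]
        have h0 : ¬ (i = 0) := by omega
        rw [if_neg h0, if_neg h0]
        rw [show n - 1 - (i - 1) = n - i from by omega]
        ring
  have hBeq : B n = C.updateRow 0 (∑ j, c j • C j) := by
    ext j k
    rcases eq_or_ne j 0 with rfl | hj
    · rw [Matrix.updateRow_self]
      rw [Finset.sum_apply]
      simpa [smul_eq_mul] using hrow0 k
    · rw [Matrix.updateRow_ne hj, hCrow, hB]
      have hj' : (j : ℕ) ≠ 0 := fun h => hj (Fin.ext h)
      rw [hσval, if_neg hj']
      rw [show n - 1 - ((j : ℕ) - 1) = n - (j : ℕ) from by omega]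
  rw [hBeq, Matrix.det_updateRow_sum]
  have hdetC : C.det = (-1) ^ N' * (B (n - 1)).det := by
    rw [hC, Matrix.det_permute, hσ, Equiv.Perm.sign_symm, sign_finRotate]
    push_cast
    ring
  have hc0 : c 0 = -(r (N' + 1) n) := by simp [hc]
  rw [hdetC, hc0, smul_eq_mul, pow_succ]
  ring
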